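/- The r-Stirling number of the second kind satisfies S2_r(n,k) = Σ_{j=k}^n S2(n,j) · C(j,k) · r^{(j−k)↓} for integer r ≥ 0, where r^{m↓} is the falling factorial. -/

import Mathlib

open Polynomial Finset

/-- The Stirling number of the second kind. -/
def stirling2 : ℕ → ℕ → ℕ
  | 0, 0 => 1
  | 0, _ + 1 => 0
  | _ + 1, 0 => 0
  | n + 1, k + 1 => (k + 1) * stirling2 n (k + 1) + stirling2 n k

/-- The forward finite difference operator `(Δ f)(r) = f (r+1) - f r`. -/
def fdiff (f : ℝ → ℝ) : ℝ → ℝ := fun r => f (r + 1) - f r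

/-- The `r`-Stirling number of the second kind, `(1/k!) Δ^k (r^n)`. -/
noncomputable def S2r (r : ℝ) (n k : ℕ) : ℝ :=
  (1 / (k.factorial : ℝ)) * (fdiff^[k] (fun x : ℝ => x ^ n)) r

lemma stirling2_eq_zero_of_lt : ∀ {n j : ℕ}, n < j → stirling2 n j = 0
  | 0, 0, h => absurd h (lt_irrefl 0)
  | 0, _ + 1, _ => rfl
  | n + 1, 0, h => absurd h (Nat.not_lt_zero _).elim
  | n + 1, j + 1, h => by
      rw [stirling2, stirling2_eq_zero_of_lt (Nat.lt_of_succ_lt_succ h),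
        stirling2_eq_zero_of_lt (Nat.lt_of_succ_lt_succ (Nat.lt_succ_of_lt h))]
      simp

lemma pow_eq_stirling_sum (n : ℕ) (x : ℝ) :
    x ^ n = ∑ j ∈ Finset.range (n + 1),
      (stirling2 n j : ℝ) * (descPochhammer ℝ j).eval x := by
  induction n with
  | zero => simp [stirling2]
  | succ n ih =>
      have key : ∀ j : ℕ, x * (descPochhammer ℝ j).eval x =
          (descPochhammer ℝ (j + 1)).eval x + (j : ℝ) * (descPochhammer ℝ j).eval x := by
        intro j
        rw [descPochhammer_succ_eval]
        ring
      have : x ^ (n + 1) = ∑ j ∈ Finset.range (n + 1),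
          ((stirling2 n j : ℝ) * (descPochhammer ℝ (j + 1)).eval x
            + (stirling2 n j : ℝ) * ((j : ℝ) * (descPochhammer ℝ j).eval x)) := by
        rw [pow_succ, ih, Finset.sum_mul]
        refine Finset.sum_congr rfl fun j _ => ?_
        rw [mul_comm _ x, ← mul_assoc, mul_comm x, mul_assoc, key, mul_add]
      rw [this, Finset.sum_add_distrib]
      -- RHS: split using recurrence
      have rhs : ∑ j ∈ Finset.range (n + 2),
          (stirling2 (n + 1) j : ℝ) * (descPochhammer ℝ j).eval x
          = ∑ j ∈ Finset.range (n + 1),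
              (stirling2 (n + 1) (j + 1) : ℝ) * (descPochhammer ℝ (j + 1)).eval x := by
        rw [Finset.sum_range_succ' _ (n + 1)]
        simp [stirling2]
      rw [rhs]
      have split : ∀ j ∈ Finset.range (n + 1),
          (stirling2 (n + 1) (j + 1) : ℝ) * (descPochhammer ℝ (j + 1)).eval x
          = (stirling2 n j : ℝ) * (descPochhammer ℝ (j + 1)).eval x
            + ((j : ℝ) + 1) * (stirling2 n (j + 1) : ℝ) * (descPochhammer ℝ (j + 1)).eval x := by
        intro j _
        rw [stirling2]
        push_cast
        ring
      rw [Finset.sum_congr rfl split, Finset.sum_add_distrib]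
      congr 1
      -- shift index on the second sums
      have : ∑ j ∈ Finset.range (n + 1),
          (stirling2 n j : ℝ) * ((j : ℝ) * (descPochhammer ℝ j).eval x)
          = ∑ j ∈ Finset.range n,
            ((j : ℝ) + 1) * (stirling2 n (j + 1) : ℝ) * (descPochhammer ℝ (j + 1)).eval x := by
        rw [Finset.sum_range_succ' _ n]
        simp only [Nat.cast_zero, zero_mul, mul_zero, add_zero]
        refine Finset.sum_congr rfl fun j _ => ?_
        push_cast; ring
      rw [this, Finset.sum_range_succ]
      rw [stirling2_eq_zero_of_lt (Nat.lt_succ_self n)]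
      simp

lemma fdiff_sum {ι : Type*} (s : Finset ι) (f : ι → ℝ → ℝ) :
    fdiff (fun x => ∑ i ∈ s, f i x) = fun x => ∑ i ∈ s, fdiff (f i) x := by
  funext x
  simp [fdiff, Finset.sum_sub_distrib]

lemma fdiff_iterate_sum {ι : Type*} (k : ℕ) (s : Finset ι) (f : ι → ℝ → ℝ) :
    fdiff^[k] (fun x => ∑ i ∈ s, f i x) = fun x => ∑ i ∈ s, fdiff^[k] (f i) x := by
  induction k generalizing f with
  | zero => simp
  | succ k ih =>
      rw [Function.iterate_succ_apply, fdiff_sum, ih]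
      simp [Function.iterate_succ_apply]

lemma fdiff_const_mul (c : ℝ) (f : ℝ → ℝ) :
    fdiff (fun x => c * f x) = fun x => c * fdiff f x := by
  funext x
  simp [fdiff, mul_sub]

lemma fdiff_desc (m : ℕ) :
    fdiff (fun x => (descPochhammer ℝ m).eval x)
      = fun x => (m : ℝ) * (descPochhammer ℝ (m - 1)).eval x := by
  cases m with
  | zero => funext x; simp [fdiff]
  | succ m =>
      funext x
      have h1 : (descPochhammer ℝ (m + 1)).eval (x + 1)
          = (x + 1) * (descPochhammer ℝ m).eval x := by
        rw [descPochhammer_succ_left, eval_mul, eval_X, eval_comp]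
        simp
      simp only [fdiff, Nat.add_sub_cancel]
      rw [h1, descPochhammer_succ_eval]
      push_cast
      ring

lemma fdiff_iterate_const_mul (k : ℕ) (c : ℝ) (f : ℝ → ℝ) :
    fdiff^[k] (fun x => c * f x) = fun x => c * fdiff^[k] f x := by
  induction k with
  | zero => rfl
  | succ k ih =>
      rw [Function.iterate_succ_apply', ih, fdiff_const_mul]
      funext x
      rw [Function.iterate_succ_apply']

lemma fdiff_iterate_desc (k j : ℕ) :
    fdiff^[k] (fun x => (descPochhammer ℝ j).eval x)
      = fun x => (j.descFactorial k : ℝ) * (descPochhammer ℝ (j - k)).eval x := by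
  induction k with
  | zero => simp
  | succ k ih =>
      rw [Function.iterate_succ_apply', ih, fdiff_const_mul, fdiff_desc]
      funext x
      rw [Nat.descFactorial_succ, show j - (k + 1) = j - k - 1 from rfl]
      push_cast
      ring

theorem rStirling_second_as_falling_sum (r : ℕ) (n k : ℕ) :
    S2r (r : ℝ) n k =
      ∑ j ∈ Finset.Icc k n,
        (stirling2 n j : ℝ) * (j.choose k : ℝ) * (descPochhammer ℝ (j - k)).eval (r : ℝ) := by
  have hpow : (fun x : ℝ => x ^ n)
      = fun x => ∑ j ∈ Finset.range (n + 1),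
          (stirling2 n j : ℝ) * (descPochhammer ℝ j).eval x := by
    funext x; exact pow_eq_stirling_sum n x
  rw [S2r, hpow]
  have : fdiff^[k] (fun x => ∑ j ∈ Finset.range (n + 1),
      (stirling2 n j : ℝ) * (descPochhammer ℝ j).eval x)
      = fun x => ∑ j ∈ Finset.range (n + 1),
          (stirling2 n j : ℝ) * ((j.descFactorial k : ℝ) * (descPochhammer ℝ (j - k)).eval x) := by
    rw [fdiff_iterate_sum]
    funext x
    refine Finset.sum_congr rfl fun j _ => ?_
    rw [fdiff_iterate_const_mul, fdiff_iterate_desc]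
  rw [this, Finset.mul_sum]
  rw [show Finset.Icc k n = Finset.filter (fun j => k ≤ j) (Finset.range (n + 1)) by
    ext j; simp [Nat.lt_succ_iff, and_comm]]
  rw [Finset.sum_filter]
  refine Finset.sum_congr rfl fun j _ => ?_
  by_cases hkj : k ≤ j
  · rw [if_pos hkj, Nat.descFactorial_eq_factorial_mul_choose]
    have hk : (k.factorial : ℝ) ≠ 0 := Nat.cast_ne_zero.mpr k.factorial_ne_zero
    push_cast
    field_simp
  · rw [if_neg hkj, Nat.descFactorial_eq_zero_iff_lt.mpr (Nat.lt_of_not_le hkj)]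
    simp
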